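/- Let T be a theory over a one-sorted first-order signature. Then the following are equivalent: (1) T is stably finite and finitely smooth; (2) T is stably infinite and has a strong pre-witness. -/

import Mathlib

open FirstOrder FirstOrder.Language

universe u v

/-- `M` (with structure `inst`) is a model of the theory `T`. -/
def ModelsT (L : FirstOrder.Language.{u, v}) (T : L.Theory) (M : Type) (inst : L.Structure M) : Prop :=
  letI := inst
  T.Model M

/-- Realization of a formula, with the structure instance given explicitly. -/
def RealizeIn (L : FirstOrder.Language.{u, v}) (M : Type) (inst : L.Structure M) {α : Type}
    (φ : L.Formula α) (v : α → M) : Prop :=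
  letI := inst
  φ.Realize v

/-- A valuation `v` satisfies the arrangement `δ_V^E` determined on the finite variable
set `V` by the equivalence relation `E`. -/
def RealizesArr {M : Type} (E : Setoid ℕ) (V : Finset ℕ) (v : ℕ → M) : Prop :=
  ∀ x ∈ V, ∀ y ∈ V, (E.r x y ↔ v x = v y)

/-- `T` is stably finite: every quantifier-free formula satisfied in a model of `T` is
satisfied in a finite model of `T` of no greater cardinality. -/
def StablyFiniteT (L : FirstOrder.Language.{u, v}) (T : L.Theory) : Prop :=
  ∀ φ : L.Formula ℕ, φ.IsQF →
    ∀ (M : Type) (inst : L.Structure M), ModelsT L T M inst →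
      ∀ v : ℕ → M, RealizeIn L M inst φ v →
        ∃ (N : Type) (instN : L.Structure N), ModelsT L T N instN ∧ Finite N ∧
          Cardinal.mk N ≤ Cardinal.mk M ∧ ∃ w : ℕ → N, RealizeIn L N instN φ w

/-- `T` is finitely smooth: for every quantifier-free formula `φ`, model of `T` with a
valuation satisfying `φ`, and finite cardinal `κ` at least the size of the model, there
is a model of `T` of size exactly `κ` with a valuation satisfying `φ`. -/
def FinitelySmoothT (L : FirstOrder.Language.{u, v}) (T : L.Theory) : Prop :=
  ∀ φ : L.Formula ℕ, φ.IsQF →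
    ∀ (M : Type) (inst : L.Structure M), ModelsT L T M inst →
      ∀ v : ℕ → M, RealizeIn L M inst φ v →
        ∀ κ : ℕ, Cardinal.mk M ≤ (κ : Cardinal) →
          ∃ (N : Type) (instN : L.Structure N), ModelsT L T N instN ∧
            Cardinal.mk N = (κ : Cardinal) ∧ ∃ w : ℕ → N, RealizeIn L N instN φ w

/-- `T` is smooth: for every quantifier-free formula `φ`, model of `T` with a valuation
satisfying `φ`, and cardinal `κ` at least the size of the model, there is a model of `T`
of size exactly `κ` with a valuation satisfying `φ`. -/
def SmoothT (L : FirstOrder.Language.{u, v}) (T : L.Theory) : Prop :=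
  ∀ φ : L.Formula ℕ, φ.IsQF →
    ∀ (M : Type) (inst : L.Structure M), ModelsT L T M inst →
      ∀ v : ℕ → M, RealizeIn L M inst φ v →
        ∀ κ : Cardinal, Cardinal.mk M ≤ κ →
          ∃ (N : Type) (instN : L.Structure N), ModelsT L T N instN ∧
            Cardinal.mk N = κ ∧ ∃ w : ℕ → N, RealizeIn L N instN φ w

/-- `T` is stably infinite: every quantifier-free formula satisfiable in some model of `T`
is satisfiable in some model of `T` with infinite domain. -/
def StablyInfiniteT (L : FirstOrder.Language.{u, v}) (T : L.Theory) : Prop :=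
  ∀ φ : L.Formula ℕ, φ.IsQF →
    (∃ (M : Type) (inst : L.Structure M), ModelsT L T M inst ∧
      ∃ v : ℕ → M, RealizeIn L M inst φ v) →
    ∃ (M : Type) (inst : L.Structure M), ModelsT L T M inst ∧ Infinite M ∧
      ∃ v : ℕ → M, RealizeIn L M inst φ v

/-- `wit` is a pre-witness for `T`: it maps quantifier-free formulas to quantifier-free
formulas; `φ` and `∃x⃗. wit(φ)` (where `x⃗ = vars(wit(φ)) \ vars(φ)`) hold in exactly the
same models-with-valuations of `T`; and if `wit(φ)` is satisfiable in a model of `T`,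
then `φ` is satisfied in some model of `T` under a valuation in which every element of
the domain is the value of some variable of `wit(φ)`. -/
def IsPreWitness (L : FirstOrder.Language.{u, v}) (T : L.Theory) (wit : L.Formula ℕ → L.Formula ℕ) :
    Prop :=
  (∀ φ : L.Formula ℕ, φ.IsQF → (wit φ).IsQF) ∧
  (∀ φ : L.Formula ℕ, φ.IsQF →
    ∀ (M : Type) (inst : L.Structure M), ModelsT L T M inst → ∀ v : ℕ → M,
      (RealizeIn L M inst φ v ↔
        ∃ w : ℕ → M, (∀ x : ℕ, x ∉ (wit φ).freeVarFinset \ φ.freeVarFinset → w x = v x) ∧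
          RealizeIn L M inst (wit φ) w)) ∧
  (∀ φ : L.Formula ℕ, φ.IsQF →
    (∃ (M : Type) (inst : L.Structure M), ModelsT L T M inst ∧
      ∃ v : ℕ → M, RealizeIn L M inst (wit φ) v) →
    ∃ (M : Type) (inst : L.Structure M), ModelsT L T M inst ∧
      ∃ v : ℕ → M, RealizeIn L M inst φ v ∧
        ∀ a : M, ∃ x ∈ (wit φ).freeVarFinset, v x = a)

/-- `wit` is a strong pre-witness for `T`: a pre-witness such that in addition, for every
quantifier-free `φ`, finite variable set `V`, and arrangement `δ_V` of `V`, if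
`wit(φ) ∧ δ_V` is satisfiable in a model of `T`, then it is satisfied in some model of `T`
under a valuation in which every element of the domain is the value of some variable of
`wit(φ) ∧ δ_V`. -/
def IsStrongPreWitness (L : FirstOrder.Language.{u, v}) (T : L.Theory)
    (wit : L.Formula ℕ → L.Formula ℕ) : Prop :=
  IsPreWitness L T wit ∧
  ∀ φ : L.Formula ℕ, φ.IsQF → ∀ (V : Finset ℕ) (E : Setoid ℕ),
    (∃ (M : Type) (inst : L.Structure M), ModelsT L T M inst ∧
      ∃ v : ℕ → M, RealizeIn L M inst (wit φ) v ∧ RealizesArr E V v) →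
    ∃ (M : Type) (inst : L.Structure M), ModelsT L T M inst ∧
      ∃ v : ℕ → M, RealizeIn L M inst (wit φ) v ∧ RealizesArr E V v ∧
        ∀ a : M, ∃ x ∈ (wit φ).freeVarFinset ∪ V, v x = a


namespace SW

variable {L : FirstOrder.Language.{u,v}}

section Congr
variable {M : Type*} [L.Structure M]

theorem realize_congr {φ : L.Formula ℕ} {v w : ℕ → M}
    (h : ∀ x ∈ φ.freeVarFinset, v x = w x) : φ.Realize v ↔ φ.Realize w := by
  classical
  have hv := BoundedFormula.realize_restrictFreeVar' (L := L) (M := M)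
      (φ := φ) (s := (φ.freeVarFinset : Set ℕ)) (Set.Subset.refl _) (v := v) (xs := default)
  have hw := BoundedFormula.realize_restrictFreeVar' (L := L) (M := M)
      (φ := φ) (s := (φ.freeVarFinset : Set ℕ)) (Set.Subset.refl _) (v := w) (xs := default)
  have : (v ∘ (fun x : (φ.freeVarFinset : Set ℕ) => (x : ℕ))) =
      (w ∘ (fun x : (φ.freeVarFinset : Set ℕ) => (x : ℕ))) := by
    funext x
    exact h x (by exact_mod_cast x.2)
  unfold Formula.Realize
  rw [← hv, ← hw]
  rw [this]

end Congr

/-- Conjunction of a list of formulas. -/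
def conjList : List (L.Formula ℕ) → L.Formula ℕ
  | [] => ⊤
  | ψ :: l => ψ ⊓ conjList l

/-- Disjunction of a list of formulas. -/
def disjList : List (L.Formula ℕ) → L.Formula ℕ
  | [] => ⊥
  | ψ :: l => ψ ⊔ disjList l

theorem conjList_isQF {l : List (L.Formula ℕ)} (h : ∀ ψ ∈ l, ψ.IsQF) : (conjList l).IsQF := by
  induction l with
  | nil => exact BoundedFormula.IsQF.top
  | cons ψ l ih =>
    exact (h ψ (by simp)).inf (ih fun ψ' h' => h ψ' (by simp [h']))

theorem disjList_isQF {l : List (L.Formula ℕ)} (h : ∀ ψ ∈ l, ψ.IsQF) : (disjList l).IsQF := by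
  induction l with
  | nil => exact BoundedFormula.isQF_bot
  | cons ψ l ih =>
    exact (h ψ (by simp)).sup (ih fun ψ' h' => h ψ' (by simp [h']))

theorem freeVarFinset_inf (φ ψ : L.Formula ℕ) :
    (φ ⊓ ψ).freeVarFinset = φ.freeVarFinset ∪ ψ.freeVarFinset := by
  simp [Min.min, BoundedFormula.not, BoundedFormula.freeVarFinset]

theorem freeVarFinset_sup (φ ψ : L.Formula ℕ) :
    (φ ⊔ ψ).freeVarFinset = φ.freeVarFinset ∪ ψ.freeVarFinset := by
  simp [Max.max, BoundedFormula.not, BoundedFormula.freeVarFinset]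

theorem conjList_freeVarFinset {l : List (L.Formula ℕ)} {ψ : L.Formula ℕ} (h : ψ ∈ l) :
    ψ.freeVarFinset ⊆ (conjList l).freeVarFinset := by
  induction l with
  | nil => simp at h
  | cons ψ' l ih =>
    rw [conjList, freeVarFinset_inf]
    rcases List.mem_cons.1 h with h | h
    · subst h; exact Finset.subset_union_left
    · exact (ih h).trans Finset.subset_union_right

theorem disjList_freeVarFinset {l : List (L.Formula ℕ)} {ψ : L.Formula ℕ} (h : ψ ∈ l) :
    ψ.freeVarFinset ⊆ (disjList l).freeVarFinset := by
  induction l with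
  | nil => simp at h
  | cons ψ' l ih =>
    rw [disjList, freeVarFinset_sup]
    rcases List.mem_cons.1 h with h | h
    · subst h; exact Finset.subset_union_left
    · exact (ih h).trans Finset.subset_union_right

section Realize
variable {M : Type*} [L.Structure M]

theorem realize_conjList {l : List (L.Formula ℕ)} {v : ℕ → M} :
    (conjList l).Realize v ↔ ∀ ψ ∈ l, ψ.Realize v := by
  induction l with
  | nil => simp [conjList]
  | cons ψ l ih => simp [conjList, Formula.realize_inf, ih]

theorem realize_disjList {l : List (L.Formula ℕ)} {v : ℕ → M} :
    (disjList l).Realize v ↔ ∃ ψ ∈ l, ψ.Realize v := by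
  induction l with
  | nil => simp [disjList, Formula.Realize]
  | cons ψ l ih => simp [disjList, Formula.realize_sup, ih]

end Realize


/-- Equality of two variables as a formula. -/
def eqF (x y : ℕ) : L.Formula ℕ := Term.equal (Term.var x) (Term.var y)

theorem eqF_isQF (x y : ℕ) : (eqF (L := L) x y).IsQF :=
  (BoundedFormula.IsAtomic.equal _ _).isQF

theorem eqF_freeVarFinset (x y : ℕ) : (eqF (L := L) x y).freeVarFinset = {x} ∪ {y} := by
  simp [eqF, Term.equal, Term.bdEqual, BoundedFormula.freeVarFinset, Term.relabel,
    Term.varFinsetLeft]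

theorem freeVarFinset_not (φ : L.Formula ℕ) : φ.not.freeVarFinset = φ.freeVarFinset := by
  simp [BoundedFormula.not, BoundedFormula.freeVarFinset]

section R
variable {M : Type*} [L.Structure M]
theorem realize_eqF {x y : ℕ} {v : ℕ → M} : (eqF (L := L) x y).Realize v ↔ v x = v y := by
  simp [eqF]
end R

/-- The arrangement formula for variable set `V` and relation (finset of pairs) `P`. -/
noncomputable def arrF (V : Finset ℕ) (P : Finset (ℕ × ℕ)) : L.Formula ℕ :=
  conjList ((V ×ˢ V).toList.map fun p => if p ∈ P then eqF p.1 p.2 else (eqF p.1 p.2).not)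

theorem arrF_isQF (V : Finset ℕ) (P : Finset (ℕ × ℕ)) : (arrF (L := L) V P).IsQF := by
  refine conjList_isQF ?_
  intro ψ hψ
  simp only [List.mem_map] at hψ
  obtain ⟨p, _, rfl⟩ := hψ
  split
  · exact eqF_isQF _ _
  · exact (eqF_isQF _ _).not

theorem arrF_freeVarFinset (V : Finset ℕ) (P : Finset (ℕ × ℕ)) :
    V ⊆ (arrF (L := L) V P).freeVarFinset := by
  intro x hx
  have hmem : (if (x, x) ∈ P then eqF (L := L) x x else (eqF x x).not) ∈
      ((V ×ˢ V).toList.map fun p => if p ∈ P then eqF (L := L) p.1 p.2 else (eqF p.1 p.2).not) :=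
    List.mem_map.2 ⟨(x, x), by simp [Finset.mem_toList, Finset.mem_product, hx], rfl⟩
  refine conjList_freeVarFinset hmem ?_
  split
  · rw [eqF_freeVarFinset]; simp
  · rw [freeVarFinset_not, eqF_freeVarFinset]; simp

section R2
variable {M : Type*} [L.Structure M]

theorem realize_arrF {V : Finset ℕ} {P : Finset (ℕ × ℕ)} {v : ℕ → M} :
    (arrF (L := L) V P).Realize v ↔ ∀ x ∈ V, ∀ y ∈ V, ((x, y) ∈ P ↔ v x = v y) := by
  rw [arrF, realize_conjList]
  constructor
  · intro h x hx y hy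
    have := h _ (List.mem_map.2 ⟨(x, y), by simp [Finset.mem_toList, Finset.mem_product, hx, hy],
      rfl⟩)
    by_cases hp : (x, y) ∈ P
    · simp only [hp, if_true, realize_eqF] at this
      simp [hp, this]
    · simp only [hp, if_false, Formula.realize_not, realize_eqF] at this
      simp [hp, this]
  · intro h ψ hψ
    simp only [List.mem_map] at hψ
    obtain ⟨⟨x, y⟩, hp, rfl⟩ := hψ
    rw [Finset.mem_toList, Finset.mem_product] at hp
    have := h x hp.1 y hp.2
    by_cases hxy : (x, y) ∈ P
    · simpa [hxy, realize_eqF] using this.1 hxy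
    · simp only [hxy, if_false, Formula.realize_not, realize_eqF]
      exact fun he => hxy (this.2 he)

end R2

theorem image_card_congr {α : Type*} {M N : Type*} [DecidableEq M] [DecidableEq N]
    (V : Finset α) (f : α → M) (g : α → N)
    (h : ∀ x ∈ V, ∀ y ∈ V, (f x = f y ↔ g x = g y)) :
    (V.image f).card = (V.image g).card := by
  apply Finset.card_bij (fun a ha => g (Finset.mem_image.1 ha).choose)
  · intro a ha
    exact Finset.mem_image_of_mem g (Finset.mem_image.1 ha).choose_spec.1
  · intro a1 ha1 a2 ha2 heq
    have h1 := (Finset.mem_image.1 ha1).choose_spec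
    have h2 := (Finset.mem_image.1 ha2).choose_spec
    rw [← h1.2, ← h2.2]
    exact ((h _ h1.1 _ h2.1).2 heq)
  · intro b hb
    obtain ⟨y, hy, rfl⟩ := Finset.mem_image.1 hb
    refine ⟨f y, Finset.mem_image_of_mem f hy, ?_⟩
    have h1 := (Finset.mem_image.1 (Finset.mem_image_of_mem f hy)).choose_spec
    exact (h _ h1.1 _ hy).1 h1.2

section Wit

variable (L : FirstOrder.Language.{u,v}) (T : L.Theory)

/-- `ψ` is satisfiable in a model of `T`. -/
def SatQF (ψ : L.Formula ℕ) : Prop :=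
  ∃ (M : Type) (inst : L.Structure M), ModelsT L T M inst ∧ ∃ v : ℕ → M, RealizeIn L M inst ψ v

/-- `ψ` is satisfiable in a finite model of `T` of size at most `n`. -/
def SatSize (ψ : L.Formula ℕ) (n : ℕ) : Prop :=
  ∃ (M : Type) (inst : L.Structure M), ModelsT L T M inst ∧ Finite M ∧ Nat.card M ≤ n ∧
    ∃ v : ℕ → M, RealizeIn L M inst ψ v

open scoped Classical

/-- Minimal size of a finite model of `T` realizing `ψ` (0 if none). -/
noncomputable def minsize (ψ : L.Formula ℕ) : ℕ :=
  if h : ∃ n, SatSize L T ψ n then Nat.find h else 0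

theorem satSize_minsize {ψ : L.Formula ℕ} (h : ∃ n, SatSize L T ψ n) :
    SatSize L T ψ (minsize L T ψ) := by
  rw [minsize, dif_pos h]; exact Nat.find_spec h

theorem minsize_le {ψ : L.Formula ℕ} {n : ℕ} (h : SatSize L T ψ n) : minsize L T ψ ≤ n := by
  rw [minsize, dif_pos ⟨n, h⟩]; exact Nat.find_min' _ h

theorem exists_satSize_of_sat (hSF : StablyFiniteT L T) {ψ : L.Formula ℕ} (hq : ψ.IsQF)
    (h : SatQF L T ψ) : ∃ n, SatSize L T ψ n := by
  obtain ⟨M, inst, hM, v, hv⟩ := h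
  obtain ⟨N, instN, hN, hfin, _, w, hw⟩ := hSF ψ hq M inst hM v hv
  exact ⟨Nat.card N, N, instN, hN, hfin, le_refl _, w, hw⟩

/-- Fresh-variable base for `φ`. -/
def NN (φ : L.Formula ℕ) : ℕ := (φ.freeVarFinset.sup id) + 1

/-- `r` fresh variables for `φ`. -/
def Yfin (φ : L.Formula ℕ) (r : ℕ) : Finset ℕ := (Finset.range r).image (fun i => NN L φ + i)

theorem Yfin_fresh {φ : L.Formula ℕ} {r : ℕ} {y : ℕ} (hy : y ∈ Yfin L φ r) :
    y ∉ φ.freeVarFinset := by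
  intro hmem
  obtain ⟨i, _, rfl⟩ := Finset.mem_image.1 hy
  have h1 : NN L φ + i ≤ φ.freeVarFinset.sup id := Finset.le_sup (f := id) hmem
  have h2 : φ.freeVarFinset.sup id + 1 ≤ NN L φ + i := Nat.le_add_right _ _
  omega

theorem Yfin_card (φ : L.Formula ℕ) (r : ℕ) : (Yfin L φ r).card = r := by
  rw [Yfin, Finset.card_image_of_injective _ (add_right_injective _), Finset.card_range]

/-- Formula asserting that the `r` fresh variables of `φ` are pairwise distinct. -/
noncomputable def etaF (φ : L.Formula ℕ) (r : ℕ) : L.Formula ℕ :=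
  arrF (Yfin L φ r) ((Yfin L φ r).image fun x => (x, x))

/-- Disjunct of the witness formula corresponding to the arrangement `P`. -/
noncomputable def chi (φ : L.Formula ℕ) (P : Finset (ℕ × ℕ)) : L.Formula ℕ :=
  (φ ⊓ arrF φ.freeVarFinset P) ⊓ etaF L φ (minsize L T (φ ⊓ arrF φ.freeVarFinset P))

/-- The witness formula for `φ`. -/
noncomputable def wit (φ : L.Formula ℕ) : L.Formula ℕ :=
  disjList (((φ.freeVarFinset ×ˢ φ.freeVarFinset).powerset.toList).map (chi L T φ))

theorem wit_isQF {φ : L.Formula ℕ} (hφ : φ.IsQF) : (wit L T φ).IsQF := by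
  refine disjList_isQF ?_
  intro ψ hψ
  simp only [List.mem_map] at hψ
  obtain ⟨P, _, rfl⟩ := hψ
  exact ((hφ.inf (arrF_isQF _ _)).inf (arrF_isQF _ _))

theorem fvf_subset_chi (φ : L.Formula ℕ) (P : Finset (ℕ × ℕ)) :
    φ.freeVarFinset ⊆ (chi L T φ P).freeVarFinset := by
  rw [chi, freeVarFinset_inf, freeVarFinset_inf]
  exact (Finset.subset_union_left).trans Finset.subset_union_left

theorem Yfin_subset_chi (φ : L.Formula ℕ) (P : Finset (ℕ × ℕ)) :
    Yfin L φ (minsize L T (φ ⊓ arrF φ.freeVarFinset P)) ⊆ (chi L T φ P).freeVarFinset := by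
  rw [chi, freeVarFinset_inf]
  exact (arrF_freeVarFinset _ _).trans Finset.subset_union_right

theorem chi_subset_wit (φ : L.Formula ℕ) {P : Finset (ℕ × ℕ)}
    (hP : P ∈ (φ.freeVarFinset ×ˢ φ.freeVarFinset).powerset) :
    (chi L T φ P).freeVarFinset ⊆ (wit L T φ).freeVarFinset := by
  refine disjList_freeVarFinset ?_
  exact List.mem_map.2 ⟨P, Finset.mem_toList.2 hP, rfl⟩

theorem fvf_subset_wit (φ : L.Formula ℕ) :
    φ.freeVarFinset ⊆ (wit L T φ).freeVarFinset :=
  (fvf_subset_chi L T φ ∅).trans (chi_subset_wit L T φ (by simp))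

section RW
variable {M : Type*} [L.Structure M]

theorem realize_etaF {φ : L.Formula ℕ} {r : ℕ} {v : ℕ → M} :
    (etaF (L := L) φ r).Realize v ↔
      ∀ x ∈ Yfin L φ r, ∀ y ∈ Yfin L φ r, (x = y ↔ v x = v y) := by
  rw [etaF, realize_arrF]
  refine forall₂_congr fun x hx => forall₂_congr fun y hy => ?_
  have : (x, y) ∈ (Yfin L φ r).image (fun z => (z, z)) ↔ x = y := by
    simp only [Finset.mem_image, Prod.ext_iff]
    constructor
    · rintro ⟨z, _, rfl, rfl⟩; rfl
    · rintro rfl; exact ⟨x, hx, rfl, rfl⟩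
  rw [this]

theorem realize_chi {φ : L.Formula ℕ} {P : Finset (ℕ × ℕ)} {v : ℕ → M} :
    (chi L T φ P).Realize v ↔
      φ.Realize v ∧ (arrF (L := L) φ.freeVarFinset P).Realize v ∧
        (etaF (L := L) φ (minsize L T (φ ⊓ arrF φ.freeVarFinset P))).Realize v := by
  rw [chi, Formula.realize_inf, Formula.realize_inf, and_assoc]

theorem realize_wit {φ : L.Formula ℕ} {v : ℕ → M} :
    (wit L T φ).Realize v ↔
      ∃ P ∈ (φ.freeVarFinset ×ˢ φ.freeVarFinset).powerset, (chi L T φ P).Realize v := by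
  rw [wit, realize_disjList]
  constructor
  · rintro ⟨ψ, hψ, hr⟩
    obtain ⟨P, hP, rfl⟩ := List.mem_map.1 hψ
    exact ⟨P, Finset.mem_toList.1 hP, hr⟩
  · rintro ⟨P, hP, hr⟩
    exact ⟨chi L T φ P, List.mem_map.2 ⟨P, Finset.mem_toList.2 hP, rfl⟩, hr⟩

end RW

end Wit

section StrongCover

variable (L : FirstOrder.Language.{u,v}) (T : L.Theory)

theorem strongCover (hSF : StablyFiniteT L T) (hFS : FinitelySmoothT L T)
    {φ : L.Formula ℕ} (hφ : φ.IsQF) (V : Finset ℕ) (E : Setoid ℕ)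
    (M : Type) (inst : L.Structure M) (hM : ModelsT L T M inst) (v : ℕ → M)
    (hv : RealizeIn L M inst (wit L T φ) v) (harr : RealizesArr E V v) :
    ∃ (A : Type) (instA : L.Structure A), ModelsT L T A instA ∧
      ∃ u : ℕ → A, RealizeIn L A instA (wit L T φ) u ∧ RealizesArr E V u ∧
        ∀ a : A, ∃ x ∈ (wit L T φ).freeVarFinset ∪ V, u x = a := by
  classical
  letI := inst
  have hv' : (wit L T φ).Realize v := hv
  obtain ⟨P, hP, hchi⟩ := (realize_wit L T).1 hv'
  rw [realize_chi] at hchi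
  obtain ⟨hφv, hδ, hη⟩ := hchi
  set Vφ := φ.freeVarFinset with hVφ
  set ψ := φ ⊓ arrF Vφ P with hψ
  set m := minsize L T ψ with hm
  have hψq : ψ.IsQF := hφ.inf (arrF_isQF _ _)
  have hψv : ψ.Realize v := Formula.realize_inf.2 ⟨hφv, hδ⟩
  have hsat : ∃ n, SatSize L T ψ n :=
    exists_satSize_of_sat L T hSF hψq ⟨M, inst, hM, v, hψv⟩
  obtain ⟨B₁, inst₁, hB₁, hfin₁, hcard₁, w₁, hw₁⟩ := satSize_minsize L T hsat
  set W := (wit L T φ).freeVarFinset ∪ V with hW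
  set q := (W.image v).card with hq
  -- m ≤ q
  have hYW : Yfin L φ m ⊆ W :=
    ((Yfin_subset_chi L T φ P).trans (chi_subset_wit L T φ hP)).trans Finset.subset_union_left
  have hinj : Set.InjOn v ↑(Yfin L φ m) := by
    intro x hx y hy hxy
    exact ((realize_etaF L).1 hη x hx y hy).2 hxy
  have hmq : m ≤ q := by
    have h1 : ((Yfin L φ m).image v).card = m := by
      rw [Finset.card_image_of_injOn hinj, Yfin_card]
    have h2 : (Yfin L φ m).image v ⊆ W.image v := Finset.image_subset_image hYW
    rw [← h1]
    exact Finset.card_le_card h2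
  -- pump up to size exactly q
  letI : Fintype B₁ := Fintype.ofFinite B₁
  have hmk₁ : Cardinal.mk B₁ = (Nat.card B₁ : Cardinal) := by
    rw [Cardinal.mk_fintype, Nat.card_eq_fintype_card]
  obtain ⟨A, instA, hA, hcardA, w₂, hw₂⟩ := hFS ψ hψq B₁ inst₁ hB₁ w₁ hw₁ q
    (by rw [hmk₁]; exact_mod_cast hcard₁.trans hmq)
  letI := instA
  have hfinA : Finite A := by
    rw [← Cardinal.lt_aleph0_iff_finite, hcardA]
    exact Cardinal.nat_lt_aleph0 q
  letI : Fintype A := Fintype.ofFinite A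
  have hAq : Fintype.card A = q := by
    have := hcardA
    rw [Cardinal.mk_fintype] at this
    exact_mod_cast this
  have hw₂' : ψ.Realize w₂ := hw₂
  rw [hψ, Formula.realize_inf] at hw₂'
  obtain ⟨hφ₂, hδ₂⟩ := hw₂'
  have hpat : ∀ x ∈ Vφ, ∀ y ∈ Vφ, (v x = v y ↔ w₂ x = w₂ y) := by
    intro x hx y hy
    rw [← (realize_arrF (L := L)).1 hδ x hx y hy, (realize_arrF (L := L)).1 hδ₂ x hx y hy]
  -- the bijection
  set J : Finset M := Vφ.image v with hJ
  set I₁ : Finset A := Vφ.image w₂ with hI₁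
  have hJI : J.card = I₁.card := image_card_congr Vφ v w₂ hpat
  have hVφW : Vφ ⊆ W := (fvf_subset_wit L T φ).trans Finset.subset_union_left
  have hJW : J ⊆ W.image v := Finset.image_subset_image hVφW
  set D : Finset M := W.image v \ J with hD
  set C : Finset A := Finset.univ \ I₁ with hC
  have hDC : D.card = C.card := by
    rw [hD, hC, Finset.card_sdiff_of_subset hJW, Finset.card_sdiff_of_subset (Finset.subset_univ _),
      Finset.card_univ, hAq, ← hq, hJI]
  have e : (D : Finset M) ≃ (C : Finset A) := Finset.equivOfCardEq hDC
  have hAne : Nonempty A := ⟨w₂ 0⟩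
  set junk : A := w₂ 0 with hjunk
  set σ : M → A := fun a =>
    if h : a ∈ J then w₂ (Finset.mem_image.1 h).choose
    else if h2 : a ∈ D then (e ⟨a, h2⟩ : A) else junk with hσ
  set u : ℕ → A := fun x => if x ∈ W then σ (v x) else junk with hu
  -- basic properties of σ
  have hσJ : ∀ a (h : a ∈ J), σ a ∈ I₁ ∧ ∀ x ∈ Vφ, v x = a → σ a = w₂ x := by
    intro a h
    have hspec := (Finset.mem_image.1 h).choose_spec
    constructor
    · rw [hσ]; simp only [dif_pos h]
      exact Finset.mem_image_of_mem w₂ hspec.1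
    · intro x hx hxa
      rw [hσ]; simp only [dif_pos h]
      exact ((hpat _ hspec.1 _ hx).1 (hspec.2.trans hxa.symm)).symm ▸ rfl
  have hσD : ∀ a (h2 : a ∈ D), σ a = (e ⟨a, h2⟩ : A) ∧ σ a ∉ I₁ := by
    intro a h2
    have hnJ : a ∉ J := (Finset.mem_sdiff.1 h2).2
    have : σ a = (e ⟨a, h2⟩ : A) := by rw [hσ]; simp only [dif_neg hnJ, dif_pos h2]
    refine ⟨this, ?_⟩
    rw [this]
    exact (Finset.mem_sdiff.1 (e ⟨a, h2⟩).2).2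
  have hp1 : ∀ x ∈ Vφ, u x = w₂ x := by
    intro x hx
    have hxW : x ∈ W := hVφW hx
    have hvJ : v x ∈ J := Finset.mem_image_of_mem v hx
    rw [hu]
    simp only [if_pos hxW]
    exact (hσJ _ hvJ).2 x hx rfl
  -- injectivity of σ on the image of W
  have hσinj : ∀ a ∈ W.image v, ∀ b ∈ W.image v, σ a = σ b → a = b := by
    intro a ha b hb hab
    by_cases haJ : a ∈ J
    · by_cases hbJ : b ∈ J
      · have hsa := (Finset.mem_image.1 haJ).choose_spec
        have hsb := (Finset.mem_image.1 hbJ).choose_spec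
        have h1 : σ a = w₂ (Finset.mem_image.1 haJ).choose := by rw [hσ]; simp [dif_pos haJ]
        have h2 : σ b = w₂ (Finset.mem_image.1 hbJ).choose := by rw [hσ]; simp [dif_pos hbJ]
        rw [h1, h2] at hab
        have := (hpat _ hsa.1 _ hsb.1).2 hab
        rw [← hsa.2, ← hsb.2, this]
      · have hbD : b ∈ D := Finset.mem_sdiff.2 ⟨hb, hbJ⟩
        exact ((hσD b hbD).2 (hab ▸ (hσJ a haJ).1)).elim
    · by_cases hbJ : b ∈ J
      · have haD : a ∈ D := Finset.mem_sdiff.2 ⟨ha, haJ⟩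
        exact ((hσD a haD).2 (hab.symm ▸ (hσJ b hbJ).1)).elim
      · have haD : a ∈ D := Finset.mem_sdiff.2 ⟨ha, haJ⟩
        have hbD : b ∈ D := Finset.mem_sdiff.2 ⟨hb, hbJ⟩
        rw [(hσD a haD).1, (hσD b hbD).1] at hab
        have := e.injective (Subtype.coe_injective hab)
        exact congrArg Subtype.val this
  have hp4 : ∀ x ∈ W, ∀ y ∈ W, (u x = u y ↔ v x = v y) := by
    intro x hx y hy
    rw [hu]
    simp only [if_pos hx, if_pos hy]
    constructor
    · exact fun h => hσinj _ (Finset.mem_image_of_mem v hx) _ (Finset.mem_image_of_mem v hy) h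
    · intro h; rw [h]
  -- surjectivity
  have hp5 : ∀ a : A, ∃ x ∈ W, u x = a := by
    intro a
    by_cases haI : a ∈ I₁
    · obtain ⟨x, hx, hxa⟩ := Finset.mem_image.1 haI
      exact ⟨x, hVφW hx, (hp1 x hx).trans hxa⟩
    · have haC : a ∈ C := Finset.mem_sdiff.2 ⟨Finset.mem_univ a, haI⟩
      set z := e.symm ⟨a, haC⟩ with hz
      have hzD : (z : M) ∈ D := z.2
      have hzW : (z : M) ∈ W.image v := (Finset.mem_sdiff.1 hzD).1
      obtain ⟨x, hx, hxz⟩ := Finset.mem_image.1 hzW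
      refine ⟨x, hx, ?_⟩
      rw [hu]
      simp only [if_pos hx]
      have hvD : v x ∈ D := hxz.symm ▸ hzD
      rw [(hσD (v x) hvD).1]
      have : (⟨v x, hvD⟩ : {b // b ∈ D}) = z := Subtype.ext hxz
      rw [this, hz, Equiv.apply_symm_apply]
  -- u realizes chi P
  have huchi : (chi L T φ P).Realize u := by
    rw [realize_chi]
    refine ⟨?_, ?_, ?_⟩
    · exact (realize_congr (fun x hx => (hp1 x hx).symm)).1 hφ₂
    · rw [realize_arrF]
      intro x hx y hy
      rw [(realize_arrF (L := L)).1 hδ x hx y hy]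
      exact (hp4 x (hVφW hx) y (hVφW hy)).symm
    · rw [realize_etaF]
      intro x hx y hy
      rw [(realize_etaF (L := L)).1 hη x hx y hy]
      exact (hp4 x (hYW hx) y (hYW hy)).symm
  refine ⟨A, instA, hA, u, ?_, ?_, ?_⟩
  · exact (realize_wit L T).2 ⟨P, hP, huchi⟩
  · intro x hx y hy
    rw [harr x hx y hy]
    exact (hp4 x (Finset.mem_union_right _ hx) y (Finset.mem_union_right _ hy)).symm
  · exact hp5

end StrongCover

section Forward

variable (L : FirstOrder.Language.{u,v}) (T : L.Theory)

theorem Yfin_mem_iff {φ : L.Formula ℕ} {r x : ℕ} :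
    x ∈ Yfin L φ r ↔ NN L φ ≤ x ∧ x - NN L φ < r := by
  rw [Yfin, Finset.mem_image]
  constructor
  · rintro ⟨i, hi, rfl⟩
    rw [Finset.mem_range] at hi
    omega
  · rintro ⟨h1, h2⟩
    exact ⟨x - NN L φ, Finset.mem_range.2 h2, by omega⟩

theorem isStrongPreWitness_wit (hSF : StablyFiniteT L T) (hFS : FinitelySmoothT L T) :
    IsStrongPreWitness L T (wit L T) := by
  classical
  constructor
  · refine ⟨fun φ hφ => wit_isQF L T hφ, ?_, ?_⟩
    · -- condition (ii)
      intro φ hφ M inst hM v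
      letI := inst
      constructor
      · intro hv
        have hv' : φ.Realize v := hv
        set Vφ := φ.freeVarFinset with hVφ
        set P : Finset (ℕ × ℕ) := (Vφ ×ˢ Vφ).filter (fun p => v p.1 = v p.2) with hPdef
        have hP : P ∈ (Vφ ×ˢ Vφ).powerset := Finset.mem_powerset.2 (Finset.filter_subset _ _)
        have hδ : (arrF (L := L) Vφ P).Realize v := by
          rw [realize_arrF]
          intro x hx y hy
          rw [hPdef, Finset.mem_filter, Finset.mem_product]
          exact ⟨fun h => h.2, fun h => ⟨⟨hx, hy⟩, h⟩⟩
        set ψ := φ ⊓ arrF Vφ P with hψdef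
        have hψv : ψ.Realize v := Formula.realize_inf.2 ⟨hv', hδ⟩
        set m := minsize L T ψ with hm
        -- get an embedding of Fin m into M
        have hemb : Nonempty (Fin m ↪ M) := by
          by_cases hMfin : Finite M
          · have hle : m ≤ Nat.card M :=
              minsize_le L T ⟨M, inst, hM, hMfin, le_refl _, v, hψv⟩
            letI : Fintype M := Fintype.ofFinite M
            refine Function.Embedding.nonempty_of_card_le ?_
            simpa using hle.trans_eq Nat.card_eq_fintype_card
          · have : Infinite M := not_finite_iff_infinite.1 hMfin
            exact ⟨(Fin.valEmbedding).trans (Infinite.natEmbedding M)⟩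
        obtain ⟨f⟩ := hemb
        set w : ℕ → M := fun x =>
          if hx : x ∈ Yfin L φ m then f ⟨x - NN L φ, (Yfin_mem_iff L).1 hx |>.2⟩ else v x with hw
        have hwv : ∀ x, x ∉ Yfin L φ m → w x = v x := by
          intro x hx; rw [hw]; simp [dif_neg hx]
        have hwVφ : ∀ x ∈ Vφ, w x = v x := fun x hx =>
          hwv x (fun hy => Yfin_fresh L hy hx)
        refine ⟨w, ?_, ?_⟩
        · intro x hx
          by_cases hxY : x ∈ Yfin L φ m
          · exfalso
            apply hx
            rw [Finset.mem_sdiff]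
            exact ⟨(chi_subset_wit L T φ hP) ((Yfin_subset_chi L T φ P) hxY),
              fun hc => Yfin_fresh L hxY hc⟩
          · exact hwv x hxY
        · show (wit L T φ).Realize w
          refine (realize_wit L T).2 ⟨P, hP, ?_⟩
          rw [realize_chi]
          refine ⟨?_, ?_, ?_⟩
          · exact (realize_congr (fun x hx => (hwVφ x hx).symm)).1 hv'
          · rw [realize_arrF]
            intro x hx y hy
            rw [hwVφ x hx, hwVφ y hy]
            exact (realize_arrF (L := L)).1 hδ x hx y hy
          · rw [realize_etaF]
            intro x hx y hy
            constructor
            · rintro rfl; rfl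
            · intro hxy
              rw [hw] at hxy
              simp only [dif_pos (show x ∈ Yfin L φ m from hx), dif_pos (show y ∈ Yfin L φ m from hy)] at hxy
              have := f.injective hxy
              have h1 := (Yfin_mem_iff L).1 hx
              have h2 := (Yfin_mem_iff L).1 hy
              have : x - NN L φ = y - NN L φ := congrArg Fin.val this
              omega
      · rintro ⟨w, hagree, hww⟩
        have hww' : (wit L T φ).Realize w := hww
        obtain ⟨P, hP, hchi⟩ := (realize_wit L T).1 hww'
        rw [realize_chi] at hchi
        have hφw : φ.Realize w := hchi.1
        show φ.Realize v
        refine (realize_congr (v := w) (w := v) ?_).1 hφw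
        intro x hx
        apply hagree
        rw [Finset.mem_sdiff]
        exact fun hc => hc.2 hx
    · -- condition (iii)
      intro φ hφ hsat
      obtain ⟨M, inst, hM, v, hv⟩ := hsat
      have harr : RealizesArr (⊤ : Setoid ℕ) (∅ : Finset ℕ) v := by
        intro x hx; simp at hx
      obtain ⟨A, instA, hA, u, hu, _, hcov⟩ :=
        strongCover L T hSF hFS hφ ∅ ⊤ M inst hM v hv harr
      refine ⟨A, instA, hA, u, ?_, ?_⟩
      · letI := instA
        have hu' : (wit L T φ).Realize u := hu
        obtain ⟨P, hP, hchi⟩ := (realize_wit L T).1 hu'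
        rw [realize_chi] at hchi
        exact hchi.1
      · intro a
        obtain ⟨x, hx, hxa⟩ := hcov a
        rw [Finset.union_empty] at hx
        exact ⟨x, hx, hxa⟩
  · -- strong condition
    intro φ hφ V E hsat
    obtain ⟨M, inst, hM, v, hv, harr⟩ := hsat
    obtain ⟨A, instA, hA, u, hu, harr', hcov⟩ :=
      strongCover L T hSF hFS hφ V E M inst hM v hv harr
    exact ⟨A, instA, hA, u, hu, harr', hcov⟩

end Forward

section StabInf

variable (L : FirstOrder.Language.{u,v}) (T : L.Theory)

theorem stablyInfinite_of (hSF : StablyFiniteT L T) (hFS : FinitelySmoothT L T) :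
    StablyInfiniteT L T := by
  classical
  intro φ hφ hsat
  obtain ⟨M, inst, hM, v, hv⟩ := hsat
  obtain ⟨N₀, inst₀, hN₀, hfin₀, _, v₀, hv₀⟩ := hSF φ hφ M inst hM v hv
  set n₀ := Nat.card N₀ with hn₀
  have hne₀ : Nonempty N₀ := ⟨v₀ 0⟩
  have hn₀pos : 1 ≤ n₀ := Nat.one_le_iff_ne_zero.2 (Nat.card_ne_zero.2 ⟨hne₀, hfin₀⟩)
  letI : Fintype N₀ := Fintype.ofFinite N₀
  have hmk₀ : Cardinal.mk N₀ = (n₀ : Cardinal) := by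
    rw [Cardinal.mk_fintype, hn₀, Nat.card_eq_fintype_card]
  have H : ∀ k : ℕ, ∃ (N : Type) (instN : L.Structure N), ModelsT L T N instN ∧
      Cardinal.mk N = ((n₀ + k : ℕ) : Cardinal) ∧ ∃ w : ℕ → N, RealizeIn L N instN φ w := by
    intro k
    obtain ⟨N, instN, hmod, hcard, w, hw⟩ := hFS φ hφ N₀ inst₀ hN₀ v₀ hv₀ (n₀ + k)
      (by rw [hmk₀]; exact_mod_cast Nat.le_add_right _ _)
    exact ⟨N, instN, hmod, hcard, w, hw⟩
  choose N instN hmod hcard w hw using H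
  letI : ∀ k, L.Structure (N k) := instN
  haveI hne : ∀ k, Nonempty (N k) := fun k => ⟨w k 0⟩
  set U : Ultrafilter ℕ := Filter.hyperfilter ℕ with hU
  set A : Type := (U : Filter ℕ).Product N with hA
  refine ⟨A, Ultraproduct.structure, ?_, ?_, ?_⟩
  · -- A models T
    refine ⟨fun φ₀ hφ₀ => ?_⟩
    rw [Ultraproduct.sentence_realize]
    refine Filter.Eventually.of_forall fun k => ?_
    exact (hmod k).realize_of_mem φ₀ hφ₀
  · -- A is infinite
    have he : ∀ k, Nonempty (N k ≃ Fin (n₀ + k)) := fun k =>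
      Cardinal.eq.1 (by rw [hcard k, Cardinal.mk_fin])
    set e := fun k => (he k).some with he'
    set g : ℕ → ∀ k, N k := fun i k =>
      (e k).symm ⟨min i (n₀ + k - 1), by omega⟩ with hg
    have hginj : Function.Injective (fun i => (↑(g i) : A)) := by
      intro i j hij
      by_contra hne'
      have hev : ∀ᶠ k in (U : Filter ℕ), g i k = g j k := Quotient.exact' hij
      have hsub : {k | g i k = g j k} ⊆ {k | k < max i j} := by
        intro k hk
        simp only [Set.mem_setOf_eq] at hk ⊢
        by_contra hlt
        push_neg at hlt
        have hik : min i (n₀ + k - 1) = i := by omega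
        have hjk : min j (n₀ + k - 1) = j := by omega
        apply hne'
        have h2 : (⟨min i (n₀ + k - 1), by omega⟩ : Fin (n₀ + k)) =
            ⟨min j (n₀ + k - 1), by omega⟩ := (e k).symm.injective hk
        have := congrArg Fin.val h2
        simp only [hik, hjk] at this
        exact this
      have hfin : Set.Finite {k | g i k = g j k} :=
        Set.Finite.subset (Set.finite_lt_nat _) hsub
      exact Filter.notMem_hyperfilter_of_finite hfin hev
    exact Infinite.of_injective _ hginj
  · -- realize φ
    refine ⟨fun x => (↑(fun k => w k x) : A), ?_⟩
    show φ.Realize _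
    have := (Ultraproduct.realize_formula_cast (u := U) φ (fun x k => w k x)).2
      (Filter.Eventually.of_forall fun k => hw k)
    exact this

end StabInf

section Backward

variable (L : FirstOrder.Language.{u,v}) (T : L.Theory)

theorem stablyFinite_of_witness (wit0 : L.Formula ℕ → L.Formula ℕ)
    (hwit : IsStrongPreWitness L T wit0) : StablyFiniteT L T := by
  classical
  obtain ⟨⟨hQF, hII, hIII⟩, hStrong⟩ := hwit
  intro φ hφ M inst hM v hv
  obtain ⟨w, hagree, hw⟩ := (hII φ hφ M inst hM v).1 hv
  set V := (wit0 φ).freeVarFinset with hV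
  set E : Setoid ℕ := Setoid.ker w with hE
  have harr : RealizesArr E V w := by
    intro x hx y hy
    exact Iff.rfl
  obtain ⟨A, instA, hA, u, hu, harrA, hcov⟩ :=
    hStrong φ hφ V E ⟨M, inst, hM, w, hw, harr⟩
  have hcov' : ∀ a : A, ∃ x, x ∈ V ∧ u x = a := by
    intro a
    obtain ⟨x, hx, hxa⟩ := hcov a
    rw [Finset.union_self] at hx
    exact ⟨x, hx, hxa⟩
  have hfinA : Finite A := by
    have hsurj : Function.Surjective (fun x : {x // x ∈ V} => u x) := by
      intro a
      obtain ⟨x, hx, hxa⟩ := hcov' a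
      exact ⟨⟨x, hx⟩, hxa⟩
    exact Finite.of_surjective _ hsurj
  choose xs hxs hux using hcov'
  have hinj : Function.Injective (fun a : A => w (xs a)) := by
    intro a b hab
    have hEr : E.r (xs a) (xs b) := hab
    have := (harrA (xs a) (hxs a) (xs b) (hxs b)).1 hEr
    rw [hux a, hux b] at this
    exact this
  refine ⟨A, instA, hA, hfinA, Cardinal.mk_le_of_injective hinj, u, ?_⟩
  exact (hII φ hφ A instA hA u).2 ⟨u, fun x _ => rfl, hu⟩

theorem finitelySmooth_of_witness (hSI : StablyInfiniteT L T)
    (wit0 : L.Formula ℕ → L.Formula ℕ)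
    (hwit : IsStrongPreWitness L T wit0) : FinitelySmoothT L T := by
  classical
  obtain ⟨⟨hQF, hII, hIII⟩, hStrong⟩ := hwit
  intro φ hφ M inst hM v hv κ hκ
  letI := inst
  have hMfin : Finite M := by
    rw [← Cardinal.lt_aleph0_iff_finite]
    exact hκ.trans_lt (Cardinal.nat_lt_aleph0 κ)
  letI : Fintype M := Fintype.ofFinite M
  have hMcard : Fintype.card M ≤ κ := by
    have := hκ
    rw [Cardinal.mk_fintype] at this
    exact_mod_cast this
  obtain ⟨w, _, hw⟩ := (hII φ hφ M inst hM v).1 hv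
  set V₀ := (wit0 φ).freeVarFinset with hV₀
  set P : Finset (ℕ × ℕ) := (V₀ ×ˢ V₀).filter (fun p => w p.1 = w p.2) with hP
  set θ := wit0 φ ⊓ arrF V₀ P with hθ
  have hθq : θ.IsQF := (hQF φ hφ).inf (arrF_isQF _ _)
  have hwθ : θ.Realize w := by
    rw [hθ, Formula.realize_inf]
    refine ⟨hw, ?_⟩
    rw [realize_arrF]
    intro x hx y hy
    rw [hP, Finset.mem_filter, Finset.mem_product]
    exact ⟨fun h => h.2, fun h => ⟨⟨hx, hy⟩, h⟩⟩
  obtain ⟨M', inst', hM', hinf, w', hw'⟩ := hSI θ hθq ⟨M, inst, hM, w, hwθ⟩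
  letI := inst'
  have hw'' : θ.Realize w' := hw'
  rw [hθ, Formula.realize_inf] at hw''
  obtain ⟨hw'wit, hw'δ⟩ := hw''
  have hpat : ∀ x ∈ V₀, ∀ y ∈ V₀, (w' x = w' y ↔ w x = w y) := by
    intro x hx y hy
    rw [← (realize_arrF (L := L)).1 hw'δ x hx y hy, hP, Finset.mem_filter, Finset.mem_product]
    exact ⟨fun h => h.2, fun h => ⟨⟨hx, hy⟩, h⟩⟩
  set c₀ := (V₀.image w).card with hc₀
  have hc₀' : (V₀.image w').card = c₀ := image_card_congr V₀ w' w hpat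
  have hc₀κ : c₀ ≤ κ := by
    calc c₀ ≤ Fintype.card M := by
          rw [hc₀, ← Finset.card_univ]
          exact Finset.card_le_card (Finset.subset_univ _)
      _ ≤ κ := hMcard
  set j := κ - c₀ with hj
  set NZ := (V₀.sup id) + 1 with hNZ
  set Z : Finset ℕ := (Finset.range j).image (fun i => NZ + i) with hZ
  have hZfresh : ∀ z ∈ Z, z ∉ V₀ := by
    intro z hz hmem
    obtain ⟨i, _, rfl⟩ := Finset.mem_image.1 hz
    have h1 : NZ + i ≤ V₀.sup id := Finset.le_sup (f := id) hmem
    omega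
  have hZcard : Z.card = j := by
    rw [hZ, Finset.card_image_of_injective _ (add_right_injective _), Finset.card_range]
  have hSinf : Set.Infinite ((↑(V₀.image w') : Set M')ᶜ) :=
    Set.Finite.infinite_compl (Finset.finite_toSet _)
  set gE := hSinf.natEmbedding with hgE
  set w'' : ℕ → M' := fun x => if x ∈ Z then (gE x : M') else w' x with hw''def
  have hw''V₀ : ∀ x ∈ V₀, w'' x = w' x := by
    intro x hx
    rw [hw''def]
    simp only [if_neg (fun hz => hZfresh x hz hx)]
  have hw''wit : (wit0 φ).Realize w'' := by
    exact (realize_congr (fun x hx => (hw''V₀ x hx).symm)).1 hw'wit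
  set E : Setoid ℕ := Setoid.ker w'' with hE
  have harr : RealizesArr E (V₀ ∪ Z) w'' := fun x _ y _ => Iff.rfl
  obtain ⟨A, instA, hA, u, hu, harrA, hcov⟩ :=
    hStrong φ hφ (V₀ ∪ Z) E ⟨M', inst', hM', w'', hw''wit, harr⟩
  have hcovset : (wit0 φ).freeVarFinset ∪ (V₀ ∪ Z) = V₀ ∪ Z := by
    rw [← hV₀, ← Finset.union_assoc, Finset.union_self]
  have hcov' : ∀ a : A, ∃ x, x ∈ V₀ ∪ Z ∧ u x = a := by
    intro a
    obtain ⟨x, hx, hxa⟩ := hcov a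
    rw [hcovset] at hx
    exact ⟨x, hx, hxa⟩
  have hfinA : Finite A := by
    have hsurj : Function.Surjective (fun x : {x // x ∈ V₀ ∪ Z} => u x) := by
      intro a
      obtain ⟨x, hx, hxa⟩ := hcov' a
      exact ⟨⟨x, hx⟩, hxa⟩
    exact Finite.of_surjective _ hsurj
  letI : Fintype A := Fintype.ofFinite A
  -- compute the cardinality of A
  have hupat : ∀ x ∈ V₀ ∪ Z, ∀ y ∈ V₀ ∪ Z, (u x = u y ↔ w'' x = w'' y) := by
    intro x hx y hy
    exact ((harrA x hx y hy)).symm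
  have huniv : (Finset.univ : Finset A) = (V₀ ∪ Z).image u := by
    apply Finset.eq_of_subset_of_card_le
    · intro a _
      obtain ⟨x, hx, hxa⟩ := hcov' a
      exact Finset.mem_image.2 ⟨x, hx, hxa⟩
    · exact Finset.card_le_card (Finset.subset_univ _)
  have hcardA : Fintype.card A = κ := by
    have h1 : Fintype.card A = ((V₀ ∪ Z).image u).card := by
      rw [← Finset.card_univ, huniv]
    have h2 : ((V₀ ∪ Z).image u).card = ((V₀ ∪ Z).image w'').card :=
      image_card_congr _ u w'' hupat
    have h3 : (V₀ ∪ Z).image w'' = V₀.image w' ∪ Z.image w'' := by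
      rw [Finset.image_union]
      congr 1
      exact Finset.image_congr (fun x hx => hw''V₀ x hx)
    have hZim : ∀ b ∈ Z.image w'', b ∈ (↑(V₀.image w') : Set M')ᶜ := by
      intro b hb
      obtain ⟨z, hz, rfl⟩ := Finset.mem_image.1 hb
      rw [hw''def]
      simp only [if_pos hz]
      exact (gE z).2
    have hdisj : Disjoint (V₀.image w') (Z.image w'') := by
      rw [Finset.disjoint_right]
      intro b hb hbV
      exact (hZim b hb) (by exact hbV)
    have hZcard' : (Z.image w'').card = j := by
      rw [Finset.card_image_of_injOn, hZcard]
      intro x hx y hy hxy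
      have hxy' : (if x ∈ Z then (gE x : M') else w' x) = (if y ∈ Z then (gE y : M') else w' y) := hxy
      rw [if_pos (Finset.mem_coe.1 hx), if_pos (Finset.mem_coe.1 hy)] at hxy'
      have hxy := hxy'
      exact gE.injective (Subtype.coe_injective hxy)
    rw [h1, h2, h3, Finset.card_union_of_disjoint hdisj, hc₀', hZcard']
    omega
  refine ⟨A, instA, hA, ?_, u, ?_⟩
  · rw [Cardinal.mk_fintype, hcardA]
  · exact (hII φ hφ A instA hA u).2 ⟨u, fun x _ => rfl, hu⟩

end Backward

end SW

/-- A theory is stably finite and finitely smooth if and only if it is stably infinite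
and has a strong pre-witness. -/
theorem stmt_15 (L : FirstOrder.Language.{u, v}) (T : L.Theory) :
    (StablyFiniteT L T ∧ FinitelySmoothT L T) ↔
      (StablyInfiniteT L T ∧ ∃ wit : L.Formula ℕ → L.Formula ℕ, IsStrongPreWitness L T wit) := by
  constructor
  · rintro ⟨hSF, hFS⟩
    exact ⟨SW.stablyInfinite_of L T hSF hFS, SW.wit L T, SW.isStrongPreWitness_wit L T hSF hFS⟩
  · rintro ⟨hSI, wit0, hwit⟩
    exact ⟨SW.stablyFinite_of_witness L T wit0 hwit,
      SW.finitelySmooth_of_witness L T hSI wit0 hwit⟩
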